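/- Let Γ be a connected graph with path metric d, and let X be a set of vertices of Γ with finite boundary width bounded by K, meaning: for every path e₁e₂…e_m in Γ whose initial vertex x and terminal vertex y lie in X and all of whose intermediate vertices lie outside X, one has d(x,y) ≤ K. Let X_r be the cover of X by balls of radius r. Then X_r has boundary width at most 2r + K. -/

import Mathlib

/-- From any walk ending in `X`, extract a nearby vertex `c ∈ X` and a walk from `c`
back to the start whose vertices other than `c` all avoid `X`. -/
lemma exists_entry_walk {V : Type*} {G : SimpleGraph V} (X : Set V) :
    ∀ {x x' : V} (p : G.Walk x x'), x' ∈ X →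
      ∃ (c : V) (_ : c ∈ X) (p' : G.Walk c x),
        p'.length ≤ p.length ∧ ∀ v ∈ p'.support, v ≠ c → v ∉ X := by
  intro x x' p
  induction p with
  | nil =>
    intro hx
    exact ⟨_, hx, SimpleGraph.Walk.nil, le_refl _, by simp⟩
  | @cons a b c' h q ih =>
    intro hx'
    obtain ⟨c, hc, p', hlen, hns⟩ := ih hx'
    by_cases hxX : a ∈ X
    · exact ⟨_, hxX, SimpleGraph.Walk.nil, Nat.zero_le _, by simp⟩
    · refine ⟨c, hc, p'.concat h.symm, ?_, ?_⟩
      · rw [SimpleGraph.Walk.length_concat]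
        simpa using Nat.add_le_add_right hlen 1
      · intro v hv hvc
        rw [SimpleGraph.Walk.support_concat, List.mem_append,
          List.mem_singleton] at hv
        rcases hv with hv | rfl
        · exact hns v hv hvc
        · exact hxX

/-- If a vertex set `X` of a connected graph has boundary width at most `K`, then
its ball cover of radius `r` has boundary width at most `2r + K`. -/
theorem ballCover_boundaryWidth {V : Type*} (G : SimpleGraph V) (hG : G.Connected)
    (X : Set V) (K r : ℕ)
    (hK : ∀ x y : V, x ∈ X → y ∈ X → ∀ w : G.Walk x y,
      (∀ v ∈ w.support, v ≠ x → v ≠ y → v ∉ X) → G.dist x y ≤ K) :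
    ∀ x y : V, x ∈ {u : V | ∃ v ∈ X, G.dist u v ≤ r} →
      y ∈ {u : V | ∃ v ∈ X, G.dist u v ≤ r} →
      ∀ w : G.Walk x y,
        (∀ v ∈ w.support, v ≠ x → v ≠ y → v ∉ {u : V | ∃ v' ∈ X, G.dist u v' ≤ r}) →
        G.dist x y ≤ 2 * r + K := by
  intro x y hx hy w hw
  obtain ⟨x', hx'X, hx'd⟩ := hx
  obtain ⟨y', hy'X, hy'd⟩ := hy
  obtain ⟨p0, hp0⟩ := hG.exists_walk_length_eq_dist x x'
  obtain ⟨q0, hq0⟩ := hG.exists_walk_length_eq_dist y y'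
  obtain ⟨c, hcX, p', hp'len, hp'⟩ := exists_entry_walk X p0 hx'X
  obtain ⟨d, hdX, q', hq'len, hq'⟩ := exists_entry_walk X q0 hy'X
  -- the combined walk from c to d
  have key : G.dist c d ≤ K := by
    refine hK c d hcX hdX (p'.append (w.append q'.reverse)) ?_
    intro v hv hvc hvd
    rw [SimpleGraph.Walk.mem_support_append_iff] at hv
    rcases hv with hv | hv
    · exact hp' v hv hvc
    · rw [SimpleGraph.Walk.mem_support_append_iff] at hv
      rcases hv with hv | hv
      · by_cases hvx : v = x
        · subst hvx
          exact hp' v p'.end_mem_support hvc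
        · by_cases hvy : v = y
          · subst hvy
            intro hvX
            exact hq' v (by simp) hvd hvX
          · intro hvX
            exact hw v hv hvx hvy ⟨v, hvX, by simp [SimpleGraph.dist_self]⟩
      · rw [SimpleGraph.Walk.support_reverse, List.mem_reverse] at hv
        exact hq' v hv hvd
  have hxc : G.dist x c ≤ r := by
    calc G.dist x c = G.dist c x := SimpleGraph.dist_comm
    _ ≤ p'.length := SimpleGraph.dist_le p'
    _ ≤ p0.length := hp'len
    _ = G.dist x x' := hp0
    _ ≤ r := hx'd
  have hdy : G.dist d y ≤ r := by
    calc G.dist d y ≤ q'.length := SimpleGraph.dist_le q'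
    _ ≤ q0.length := hq'len
    _ = G.dist y y' := hq0
    _ ≤ r := hy'd
  calc G.dist x y ≤ G.dist x c + G.dist c y := hG.dist_triangle
    _ ≤ G.dist x c + (G.dist c d + G.dist d y) := by
        exact Nat.add_le_add_left hG.dist_triangle _
    _ ≤ r + (K + r) := by
        exact Nat.add_le_add hxc (Nat.add_le_add key hdy)
    _ = 2 * r + K := by ring
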